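/- Let φ : ℂ → ℂ be a continuously differentiable function with compact support. Then the function f(z) = -(1/π) ∬_ℂ φ(ζ)/(ζ - z) dm₂(ζ) is continuously differentiable and satisfies ∂f/∂z̄ = φ on ℂ, where dm₂ is Lebesgue measure on ℂ. -/

import Mathlib

open MeasureTheory Set Filter Complex
open scoped Real Topology Convolution ENNReal

noncomputable section CauchyPompeiuAux


example : Measurable (fun u : ℂ => u⁻¹) := measurable_inv

lemma lintegral_comp_polarCoord_symm' (f : ℝ × ℝ → ℝ≥0∞) :
    ∫⁻ p in polarCoord.target, ENNReal.ofReal p.1 * f (polarCoord.symm p) = ∫⁻ p, f p := by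
  set B : ℝ × ℝ → ℝ × ℝ →L[ℝ] ℝ × ℝ := fun p =>
    LinearMap.toContinuousLinearMap (Matrix.toLin (Module.Basis.finTwoProd ℝ) (Module.Basis.finTwoProd ℝ)
      !![Real.cos p.2, -p.1 * Real.sin p.2; Real.sin p.2, p.1 * Real.cos p.2])
  have A : ∀ p ∈ polarCoord.target, HasFDerivWithinAt polarCoord.symm (B p) polarCoord.target p :=
    fun p _ => (hasFDerivAt_polarCoord_symm p).hasFDerivWithinAt
  have B_det : ∀ p, (B p).det = p.1 := by
    intro p
    conv_rhs => rw [← one_mul p.1, ← Real.cos_sq_add_sin_sq p.2]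
    simp only [B, neg_mul, LinearMap.det_toContinuousLinearMap, LinearMap.det_toLin,
      Matrix.det_fin_two_of, sub_neg_eq_add]
    ring
  symm
  calc
    ∫⁻ p, f p = ∫⁻ p in polarCoord.source, f p := by
      rw [← setLIntegral_univ]
      exact (setLIntegral_congr polarCoord_source_ae_eq_univ.symm)
    _ = ∫⁻ p in polarCoord.symm '' polarCoord.target, f p := by
      rw [polarCoord.symm_image_target_eq_source]
    _ = ∫⁻ p in polarCoord.target, ENNReal.ofReal |(B p).det| * f (polarCoord.symm p) := by
      apply lintegral_image_eq_lintegral_abs_det_fderiv_mul volume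
        polarCoord.open_target.measurableSet A polarCoord.symm.injOn
    _ = _ := by
      apply setLIntegral_congr_fun polarCoord.open_target.measurableSet
      intro p hp
      dsimp only
      rw [B_det, abs_of_pos hp.1]

lemma complex_lintegral_comp_polarCoord_symm (f : ℂ → ℝ≥0∞) (hf : Measurable f) :
    ∫⁻ p in polarCoord.target, ENNReal.ofReal p.1 * f (Complex.polarCoord.symm p) = ∫⁻ z, f z := by
  rw [← (Complex.volume_preserving_equiv_real_prod.symm).lintegral_comp hf,
    ← lintegral_comp_polarCoord_symm' (fun p => f (Complex.measurableEquivRealProd.symm p))]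
  rfl

-- integrability of inv on closed balls
lemma integrableOn_inv_closedBall (R : ℝ) :
    IntegrableOn (fun u : ℂ => u⁻¹) (Metric.closedBall 0 R) := by
  have hmeas : Measurable (fun u : ℂ => u⁻¹) := measurable_inv
  constructor
  · exact (hmeas.aemeasurable.aestronglyMeasurable).restrict
  · rw [HasFiniteIntegral,
      ← lintegral_indicator measurableSet_closedBall (fun u : ℂ => ‖u⁻¹‖ₑ),
      ← complex_lintegral_comp_polarCoord_symm _ (hmeas.enorm.indicator measurableSet_closedBall)]
    have hle : ∀ p ∈ polarCoord.target,
        ENNReal.ofReal p.1 * (Metric.closedBall (0:ℂ) R).indicator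
          (fun u => (‖u⁻¹‖₊ : ℝ≥0∞)) (Complex.polarCoord.symm p)
        ≤ (Ioc (0:ℝ) R ×ˢ Ioo (-Real.pi) Real.pi).indicator (fun _ => 1) p := by
      intro p hp
      rw [polarCoord_target] at hp
      obtain ⟨hp1, hp2⟩ := hp
      by_cases hR : p.1 ≤ R
      · have hmem : p ∈ Ioc (0:ℝ) R ×ˢ Ioo (-Real.pi) Real.pi := ⟨⟨hp1, hR⟩, hp2⟩
        rw [indicator_of_mem hmem]
        by_cases hball : Complex.polarCoord.symm p ∈ Metric.closedBall (0:ℂ) R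
        · rw [indicator_of_mem hball]
          have habs : ‖(Complex.polarCoord.symm p)⁻¹‖₊ = (Real.toNNReal p.1)⁻¹ := by
            rw [nnnorm_inv]
            ext
            simp only [coe_nnnorm, Complex.norm_polarCoord_symm,
              NNReal.coe_inv, Real.coe_toNNReal _ (le_of_lt hp1), abs_of_pos (mem_Ioi.mp hp1)]
          rw [habs]
          rw [ENNReal.coe_inv (by simp only [ne_eq, Real.toNNReal_eq_zero, not_le]; exact hp1)]
          rw [← ENNReal.ofReal, ENNReal.ofReal_eq_coe_nnreal (le_of_lt hp1)]
          exact ENNReal.mul_inv_le_one _ -- guess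
        · rw [indicator_of_notMem hball, mul_zero]; exact zero_le
      · have hball : Complex.polarCoord.symm p ∉ Metric.closedBall (0:ℂ) R := by
          simp only [Metric.mem_closedBall, dist_zero_right,
            Complex.norm_polarCoord_symm, abs_of_pos (mem_Ioi.mp hp1), not_le]
          linarith
        rw [indicator_of_notMem hball, mul_zero]
        exact zero_le
    calc ∫⁻ p in polarCoord.target, ENNReal.ofReal p.1 * (Metric.closedBall (0:ℂ) R).indicator
          (fun u => (‖u⁻¹‖₊ : ℝ≥0∞)) (Complex.polarCoord.symm p)
        ≤ ∫⁻ p in polarCoord.target,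
            (Ioc (0:ℝ) R ×ˢ Ioo (-Real.pi) Real.pi).indicator (fun _ => 1) p :=
          setLIntegral_mono' polarCoord.open_target.measurableSet hle
      _ ≤ ∫⁻ p, (Ioc (0:ℝ) R ×ˢ Ioo (-Real.pi) Real.pi).indicator (fun _ => 1) p :=
          setLIntegral_le_lintegral _ _
      _ = volume (Ioc (0:ℝ) R ×ˢ Ioo (-Real.pi) Real.pi) := by
          rw [lintegral_indicator ((measurableSet_Ioc).prod measurableSet_Ioo)]
          simp
      _ < ⊤ := by
          rw [Measure.volume_eq_prod, Measure.prod_prod]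
          exact ENNReal.mul_lt_top (by simp) (by simp)

lemma keyCLM (D : ℂ →L[ℝ] ℂ) (u : ℂ) :
    D u + Complex.I * D (Complex.I * u)
      = ((u.re : ℂ) - u.im * Complex.I) * (D 1 + Complex.I * D Complex.I) := by
  have h1 : ∀ v : ℂ, D v = (v.re : ℂ) * D 1 + (v.im : ℂ) * D Complex.I := by
    intro v
    have hv : v = v.re • (1:ℂ) + v.im • Complex.I := by
      simp [Complex.real_smul]
    conv_lhs => rw [hv]
    rw [map_add, _root_.map_smul, _root_.map_smul]
    simp [Complex.real_smul]
  rw [h1 u, h1 (Complex.I * u)]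
  simp only [Complex.mul_re, Complex.mul_im, Complex.I_re, Complex.I_im]
  push_cast
  ring_nf
  rw [Complex.I_sq]
  ring

noncomputable def Ee (θ : ℝ) : ℂ := Complex.exp (θ * Complex.I)

lemma Ee_ne_zero (θ : ℝ) : Ee θ ≠ 0 := Complex.exp_ne_zero _

lemma norm_Ee (θ : ℝ) : ‖Ee θ‖ = 1 := by
  simp [Ee, Complex.norm_exp_ofReal_mul_I]

lemma continuous_Ee : Continuous Ee := by
  unfold Ee; continuity

lemma Ee_pi : Ee Real.pi = -1 := Complex.exp_pi_mul_I

lemma Ee_neg_pi : Ee (-Real.pi) = -1 := by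
  unfold Ee
  push_cast
  rw [neg_mul, Complex.exp_neg, Complex.exp_pi_mul_I]
  norm_num

lemma Ee_inv (θ : ℝ) : (Ee θ)⁻¹ = ((Ee θ).re : ℂ) - (Ee θ).im * Complex.I := by
  have h1 : Ee θ = (Real.cos θ : ℂ) + (Real.sin θ : ℂ) * Complex.I := by
    unfold Ee
    rw [Complex.exp_mul_I]
    simp [Complex.ofReal_cos, Complex.ofReal_sin]
  have h2 : (Ee θ)⁻¹ = Ee (-θ) := by
    unfold Ee
    rw [← Complex.exp_neg]
    push_cast
    ring_nf
  rw [h2]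
  have h3 : Ee (-θ) = (Real.cos θ : ℂ) - (Real.sin θ : ℂ) * Complex.I := by
    unfold Ee
    rw [Complex.exp_mul_I]
    push_cast
    simp [Complex.ofReal_cos, Complex.ofReal_sin, Complex.cos_neg, Complex.sin_neg]
    ring
  rw [h3, h1]
  simp

lemma hasDerivAt_Ee (θ : ℝ) : HasDerivAt Ee (Complex.I * Ee θ) θ := by
  have h1 : HasDerivAt (fun w : ℂ => Complex.exp (w * Complex.I)) (Complex.exp (θ * Complex.I) * Complex.I) θ := by
    simpa [Function.comp_def] using (Complex.hasDerivAt_exp ((θ:ℂ) * Complex.I)).comp (θ:ℂ)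
      ((hasDerivAt_id (θ:ℂ)).mul_const Complex.I)
  have h2 := h1.comp_ofReal (z := θ)
  rw [mul_comm]
  exact h2

lemma integrableOn_prod_vanish (F : ℝ × ℝ → ℂ) (hF : Continuous F) (R₀ : ℝ) (hR₀ : 0 ≤ R₀)
    (hv : ∀ p : ℝ × ℝ, R₀ ≤ p.1 → F p = 0) :
    IntegrableOn F (Ioi (0:ℝ) ×ˢ Ioo (-Real.pi) Real.pi) := by
  have hsplit : Ioi (0:ℝ) ×ˢ Ioo (-Real.pi) Real.pi
      = (Ioc (0:ℝ) R₀ ×ˢ Ioo (-Real.pi) Real.pi) ∪ (Ioi R₀ ×ˢ Ioo (-Real.pi) Real.pi) := by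
    rw [← union_prod, Ioc_union_Ioi_eq_Ioi hR₀]
  rw [hsplit]
  apply IntegrableOn.union
  · exact (hF.continuousOn.integrableOn_compact (isCompact_Icc.prod isCompact_Icc)).mono_set
      (prod_mono Ioc_subset_Icc_self Ioo_subset_Icc_self)
  · exact (integrableOn_zero).congr_fun (fun p hp => (hv p (le_of_lt hp.1)).symm)
      (measurableSet_Ioi.prod measurableSet_Ioo)

lemma integrableOn_Ioi_vanish (F : ℝ → ℂ) (hF : Continuous F) (R₀ : ℝ) (hR₀ : 0 ≤ R₀)
    (hv : ∀ r : ℝ, R₀ ≤ r → F r = 0) : IntegrableOn F (Ioi (0:ℝ)) := by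
  rw [← Ioc_union_Ioi_eq_Ioi hR₀]
  apply IntegrableOn.union
  · exact (hF.continuousOn.integrableOn_compact isCompact_Icc).mono_set Ioc_subset_Icc_self
  · exact (integrableOn_zero).congr_fun (fun r hr => (hv r (le_of_lt hr)).symm) measurableSet_Ioi

lemma core_lemma (φ : ℂ → ℂ) (hφ : ContDiff ℝ 1 φ) (hsupp : HasCompactSupport φ) (z : ℂ) :
    ∫ t : ℂ, (fderiv ℝ φ t 1 + Complex.I * fderiv ℝ φ t Complex.I) / (t - z)
      = -(2 * (Real.pi : ℂ)) * φ z := by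
  obtain ⟨M, hM⟩ := hsupp.isCompact.isBounded.subset_closedBall 0
  set R₀ : ℝ := ‖z‖ + |M| + 1 with hR₀def
  have hR₀ : 0 ≤ R₀ := by positivity
  set D := fderiv ℝ φ with hDdef
  have hDc : Continuous D := hφ.continuous_fderiv one_ne_zero
  have hφd : Differentiable ℝ φ := hφ.differentiable one_ne_zero
  have hφz : ∀ w : ℂ, |M| < ‖w‖ → φ w = 0 := by
    intro w hw
    apply image_eq_zero_of_notMem_tsupport
    intro hmem
    have h2 := hM hmem
    rw [Metric.mem_closedBall, dist_zero_right] at h2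
    have := le_abs_self M
    linarith
  have hDz : ∀ w : ℂ, |M| < ‖w‖ → D w = 0 := by
    intro w hw
    apply image_eq_zero_of_notMem_tsupport
    intro hmem
    have h2 := hM (tsupport_fderiv_subset ℝ hmem)
    rw [Metric.mem_closedBall, dist_zero_right] at h2
    have := le_abs_self M
    linarith
  have hnormq : ∀ (r θ : ℝ), R₀ ≤ r → |M| < ‖z + (r:ℂ) * Ee θ‖ := by
    intro r θ hr
    have h1 : ‖(r:ℂ) * Ee θ‖ = r := by
      rw [norm_mul, norm_Ee, mul_one, Complex.norm_real, Real.norm_eq_abs, _root_.abs_of_nonneg (le_trans hR₀ hr)]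
    have h2 : ‖(r:ℂ) * Ee θ‖ ≤ ‖z + (r:ℂ) * Ee θ‖ + ‖z‖ := by
      calc ‖(r:ℂ) * Ee θ‖ = ‖(z + (r:ℂ) * Ee θ) - z‖ := by ring_nf
        _ ≤ _ := norm_sub_le _ _
    rw [h1] at h2
    have : ‖z‖ + |M| + 1 ≤ r := hr
    linarith
  set A : ℝ × ℝ → ℂ := fun p => D (z + (p.1:ℂ) * Ee p.2) (Ee p.2) with hAdef
  set B : ℝ × ℝ → ℂ :=
    fun p => Complex.I * D (z + (p.1:ℂ) * Ee p.2) (Complex.I * Ee p.2) with hBdef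
  have hqc : Continuous (fun p : ℝ × ℝ => z + (p.1:ℂ) * Ee p.2) :=
    continuous_const.add ((Complex.continuous_ofReal.comp continuous_fst).mul
      (continuous_Ee.comp continuous_snd))
  have hAc : Continuous A := (hDc.comp hqc).clm_apply (continuous_Ee.comp continuous_snd)
  have hBc : Continuous B := continuous_const.mul
    ((hDc.comp hqc).clm_apply (continuous_const.mul (continuous_Ee.comp continuous_snd)))
  have hAv : ∀ p : ℝ × ℝ, R₀ ≤ p.1 → A p = 0 := by
    intro p hp
    simp [hAdef, hDz _ (hnormq p.1 p.2 hp)]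
  have hBv : ∀ p : ℝ × ℝ, R₀ ≤ p.1 → B p = 0 := by
    intro p hp
    simp [hBdef, hDz _ (hnormq p.1 p.2 hp)]
  have hAint : IntegrableOn A (Ioi (0:ℝ) ×ˢ Ioo (-Real.pi) Real.pi) :=
    integrableOn_prod_vanish A hAc R₀ hR₀ hAv
  have hBint : IntegrableOn B (Ioi (0:ℝ) ×ˢ Ioo (-Real.pi) Real.pi) :=
    integrableOn_prod_vanish B hBc R₀ hR₀ hBv
  have hsymm : ∀ p : ℝ × ℝ, Complex.polarCoord.symm p = (p.1 : ℂ) * Ee p.2 := by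
    intro p
    rw [Complex.polarCoord_symm_apply]
    unfold Ee
    rw [Complex.exp_mul_I]
    simp [Complex.ofReal_cos, Complex.ofReal_sin]
  -- step 1 : translation
  have step1 : ∫ t : ℂ, (D t 1 + Complex.I * D t Complex.I) / (t - z)
      = ∫ w : ℂ, (D (w + z) 1 + Complex.I * D (w + z) Complex.I) / w := by
    rw [← integral_add_right_eq_self (fun t : ℂ => (D t 1 + Complex.I * D t Complex.I)/(t - z)) z]
    simp
  -- step 2 : polar coordinates
  have step2 : ∫ w : ℂ, (D (w + z) 1 + Complex.I * D (w + z) Complex.I) / w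
      = ∫ p in polarCoord.target,
          p.1 • ((D (Complex.polarCoord.symm p + z) 1
            + Complex.I * D (Complex.polarCoord.symm p + z) Complex.I)
              / Complex.polarCoord.symm p) :=
    (Complex.integral_comp_polarCoord_symm
      (fun w => (D (w + z) 1 + Complex.I * D (w + z) Complex.I) / w)).symm
  -- step 3 : pointwise identity on the target
  have step3 : ∀ p ∈ polarCoord.target,
      p.1 • ((D (Complex.polarCoord.symm p + z) 1
        + Complex.I * D (Complex.polarCoord.symm p + z) Complex.I)
          / Complex.polarCoord.symm p) = A p + B p := by
    rintro ⟨r, θ⟩ ⟨hr, hθ⟩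
    have hr' : (0:ℝ) < r := hr
    have hrne : ((r:ℝ):ℂ) ≠ 0 := by exact_mod_cast ne_of_gt hr'
    have hEne : Ee θ ≠ 0 := Ee_ne_zero θ
    rw [hsymm]
    have hcomm : (r:ℂ) * Ee θ + z = z + (r:ℂ) * Ee θ := by ring
    rw [hcomm]
    set q : ℂ := z + (r:ℂ) * Ee θ
    have lhs_eq : (r:ℝ) • ((D q 1 + Complex.I * D q Complex.I) / ((r:ℂ) * Ee θ))
        = (Ee θ)⁻¹ * (D q 1 + Complex.I * D q Complex.I) := by
      rw [Complex.real_smul]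
      field_simp
    rw [lhs_eq, Ee_inv]
    have := keyCLM (D q) (Ee θ)
    rw [hAdef, hBdef]
    simp only []
    rw [← this]
  rw [step1, step2, setIntegral_congr_fun polarCoord.open_target.measurableSet step3]
  have htarget : polarCoord.target = Ioi (0:ℝ) ×ˢ Ioo (-Real.pi) Real.pi := polarCoord_target
  rw [htarget]
  rw [integral_add hAint hBint]
  -- the A part
  have stepA : ∫ p in Ioi (0:ℝ) ×ˢ Ioo (-Real.pi) Real.pi, A p = -(2 * (Real.pi:ℝ)) • φ z := by
    rw [Measure.volume_eq_prod, ← Measure.prod_restrict]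
    rw [integral_prod_symm A (by
      rw [Measure.prod_restrict, ← Measure.volume_eq_prod]
      exact hAint)]
    have hinner : ∀ θ ∈ Ioo (-Real.pi) Real.pi, (∫ r in Ioi (0:ℝ), A (r, θ)) = -φ z := by
      intro θ _
      have hu : ∀ r ∈ Ici (0:ℝ), HasDerivAt (fun r : ℝ => φ (z + (r:ℂ) * Ee θ)) (A (r, θ)) r := by
        intro r _
        have hl : HasDerivAt (fun r : ℝ => z + (r:ℂ) * Ee θ) (Ee θ) r := by
          simpa using ((Complex.ofRealCLM.hasDerivAt (x := r)).mul_const (Ee θ)).const_add z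
        exact (hφd _).hasFDerivAt.comp_hasDerivAt r hl
      have hint : IntegrableOn (fun r : ℝ => A (r, θ)) (Ioi 0) :=
        integrableOn_Ioi_vanish _ (hAc.comp (continuous_id.prodMk continuous_const)) R₀ hR₀
          (fun r hr => hAv (r, θ) hr)
      have htend : Tendsto (fun r : ℝ => φ (z + (r:ℂ) * Ee θ)) atTop (𝓝 0) := by
        apply Tendsto.congr' _ tendsto_const_nhds
        filter_upwards [eventually_ge_atTop R₀] with r hr
        exact (hφz _ (hnormq r θ hr)).symm
      have := integral_Ioi_of_hasDerivAt_of_tendsto' hu hint htend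
      rw [this]
      simp
    rw [setIntegral_congr_fun measurableSet_Ioo hinner, setIntegral_const, measureReal_def, Real.volume_Ioo]
    rw [ENNReal.toReal_ofReal (by linarith [Real.pi_pos])]
    have : Real.pi - -Real.pi = 2 * Real.pi := by ring
    rw [this, smul_neg, neg_smul]
  -- the B part
  have stepB : ∫ p in Ioi (0:ℝ) ×ˢ Ioo (-Real.pi) Real.pi, B p = 0 := by
    rw [Measure.volume_eq_prod, ← Measure.prod_restrict]
    rw [integral_prod B (by
      rw [Measure.prod_restrict, ← Measure.volume_eq_prod]
      exact hBint)]
    have hinner : ∀ r ∈ Ioi (0:ℝ), (∫ θ in Ioo (-Real.pi) Real.pi, B (r, θ)) = 0 := by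
      intro r hr
      have hr' : (0:ℝ) < r := hr
      have hv : ∀ θ : ℝ, HasDerivAt (fun θ : ℝ => φ (z + (r:ℂ) * Ee θ))
          ((r:ℝ) • (D (z + (r:ℂ) * Ee θ) (Complex.I * Ee θ))) θ := by
        intro θ
        have hl : HasDerivAt (fun θ : ℝ => z + (r:ℂ) * Ee θ) ((r:ℂ) * (Complex.I * Ee θ)) θ :=
          ((hasDerivAt_Ee θ).const_mul (r:ℂ)).const_add z
        have h2 := (hφd _).hasFDerivAt.comp_hasDerivAt θ hl
        have h3 : (r:ℂ) * (Complex.I * Ee θ) = (r:ℝ) • (Complex.I * Ee θ) := by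
          rw [Complex.real_smul]
        rw [h3, (D _).map_smul] at h2
        exact h2
      have hcont : Continuous (fun θ : ℝ => (r:ℝ) • (D (z + (r:ℂ) * Ee θ) (Complex.I * Ee θ))) := by
        apply Continuous.fun_const_smul
        exact (hDc.comp (continuous_const.add (continuous_const.mul continuous_Ee))).clm_apply
          (continuous_const.mul continuous_Ee)
      have h0 : ∫ θ in Ioo (-Real.pi) Real.pi,
          (r:ℝ) • (D (z + (r:ℂ) * Ee θ) (Complex.I * Ee θ)) = 0 := by
        rw [setIntegral_congr_set Ioo_ae_eq_Ioc,
          ← intervalIntegral.integral_of_le (by linarith [Real.pi_pos])]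
        rw [intervalIntegral.integral_eq_sub_of_hasDerivAt (fun θ _ => hv θ)
          (hcont.intervalIntegrable _ _)]
        simp [Ee_pi, Ee_neg_pi]
      have hBeq : ∀ θ : ℝ, B (r, θ)
          = Complex.I * ((r:ℝ)⁻¹ • ((r:ℝ) • D (z + (r:ℂ) * Ee θ) (Complex.I * Ee θ))) := by
        intro θ
        rw [smul_smul, inv_mul_cancel₀ (ne_of_gt hr'), one_smul]
      calc ∫ θ in Ioo (-Real.pi) Real.pi, B (r, θ)
          = ∫ θ in Ioo (-Real.pi) Real.pi,
              Complex.I * ((r:ℝ)⁻¹ • ((r:ℝ) • D (z + (r:ℂ) * Ee θ) (Complex.I * Ee θ))) := by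
            simp_rw [hBeq]
        _ = Complex.I * ((r:ℝ)⁻¹ • ∫ θ in Ioo (-Real.pi) Real.pi,
              (r:ℝ) • D (z + (r:ℂ) * Ee θ) (Complex.I * Ee θ)) := by
            rw [integral_const_mul, integral_smul]
        _ = 0 := by rw [h0, smul_zero, mul_zero]
    rw [setIntegral_congr_fun measurableSet_Ioi hinner]
    simp
  rw [stepA, stepB, add_zero]
  rw [neg_smul, Complex.real_smul]
  push_cast
  ring

lemma locallyIntegrable_negInv : LocallyIntegrable (fun u : ℂ => -u⁻¹) volume := by
  rw [locallyIntegrable_iff]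
  intro K hK
  obtain ⟨R, hR⟩ := hK.isBounded.subset_closedBall 0
  exact ((integrableOn_inv_closedBall R).mono_set hR).neg

/-- The Cauchy–Pompeiu solution of the inhomogeneous Cauchy–Riemann equation: for `φ : ℂ → ℂ`
continuously differentiable with compact support, `f(z) = -(1/π) ∬ φ(ζ)/(ζ - z) dm₂(ζ)` is
continuously differentiable and satisfies `∂f/∂z̄ = φ` on `ℂ`. -/
theorem stmt16 (φ : ℂ → ℂ) (hφ : ContDiff ℝ 1 φ) (hsupp : HasCompactSupport φ) :
    ContDiff ℝ 1 (fun z : ℂ => -(1 / (Real.pi : ℂ)) * ∫ ζ : ℂ, φ ζ / (ζ - z)) ∧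
    ∀ z : ℂ,
      (fderiv ℝ (fun z : ℂ => -(1 / (Real.pi : ℂ)) * ∫ ζ : ℂ, φ ζ / (ζ - z)) z 1 +
          Complex.I *
            fderiv ℝ (fun z : ℂ => -(1 / (Real.pi : ℂ)) * ∫ ζ : ℂ, φ ζ / (ζ - z)) z Complex.I) / 2
        = φ z := by
  set L : ℂ →L[ℝ] ℂ →L[ℝ] ℂ := ContinuousLinearMap.mul ℝ ℂ with hLdef
  set k : ℂ → ℂ := fun u => -u⁻¹ with hkdef
  have hk : LocallyIntegrable k volume := locallyIntegrable_negInv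
  have hconv_eq : ∀ z : ℂ, (φ ⋆[L] k) z = ∫ ζ : ℂ, φ ζ / (ζ - z) := by
    intro z
    rw [convolution_def]
    congr 1 with t
    simp only [hLdef, hkdef, ContinuousLinearMap.mul_apply']
    rw [div_eq_mul_inv, show (t - z)⁻¹ = -(z - t)⁻¹ by rw [← inv_neg, neg_sub]]
  have hfun_eq : (fun z : ℂ => -(1 / (Real.pi : ℂ)) * ∫ ζ : ℂ, φ ζ / (ζ - z))
      = fun z : ℂ => -(1 / (Real.pi : ℂ)) * (φ ⋆[L] k) z := by
    funext z
    rw [hconv_eq]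
  rw [hfun_eq]
  have hsmooth : ContDiff ℝ 1 (φ ⋆[L] k) := hsupp.contDiff_convolution_left L hφ hk
  constructor
  · exact contDiff_const.mul hsmooth
  intro z
  -- derivative of the convolution
  have hder : HasFDerivAt (φ ⋆[L] k) ((fderiv ℝ φ ⋆[L.precompL ℂ] k) z) z :=
    hsupp.hasFDerivAt_convolution_left L hφ hk z
  have hderf : HasFDerivAt (fun z : ℂ => -(1 / (Real.pi : ℂ)) * (φ ⋆[L] k) z)
      (-(1 / (Real.pi : ℂ)) • ((fderiv ℝ φ ⋆[L.precompL ℂ] k) z)) z := hder.const_mul _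
  rw [hderf.fderiv]
  -- integrability of the convolution integrand for fderiv φ
  have hDsupp : HasCompactSupport (fderiv ℝ φ) := hsupp.fderiv ℝ
  have hDcont : Continuous (fderiv ℝ φ) := hφ.continuous_fderiv one_ne_zero
  have hDint : Integrable (fun t : ℂ => (L.precompL ℂ) (fderiv ℝ φ t) (k (z - t))) volume :=
    hDsupp.convolutionExists_left (L.precompL ℂ) hDcont hk z
  have happly : ∀ v : ℂ, ((fderiv ℝ φ ⋆[L.precompL ℂ] k) z) v
      = ∫ t : ℂ, fderiv ℝ φ t v * k (z - t) := by
    intro v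
    rw [convolution_def, ContinuousLinearMap.integral_apply hDint]
    rfl
  have hIntv : ∀ v : ℂ, Integrable (fun t : ℂ => fderiv ℝ φ t v * k (z - t)) volume := by
    intro v
    have := (ContinuousLinearMap.apply ℝ ℂ v).integrable_comp hDint
    exact this
  simp only [ContinuousLinearMap.coe_smul', Pi.smul_apply, happly, smul_eq_mul]
  have hsum : ∫ t : ℂ, (fderiv ℝ φ t 1 + Complex.I * fderiv ℝ φ t Complex.I) * k (z - t)
      = (∫ t : ℂ, fderiv ℝ φ t 1 * k (z - t))
        + Complex.I * ∫ t : ℂ, fderiv ℝ φ t Complex.I * k (z - t) := by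
    rw [← integral_const_mul Complex.I,
      ← integral_add (hIntv 1) ((hIntv Complex.I).const_mul Complex.I)]
    congr 1 with t
    ring
  have hkey : ∫ t : ℂ, (fderiv ℝ φ t 1 + Complex.I * fderiv ℝ φ t Complex.I) * k (z - t)
      = -(2 * (Real.pi : ℂ)) * φ z := by
    rw [← core_lemma φ hφ hsupp z]
    congr 1 with t
    rw [div_eq_mul_inv, show (t - z)⁻¹ = -(z - t)⁻¹ by rw [← inv_neg, neg_sub]]
  have h2 := hsum.symm.trans hkey
  have hπ : (Real.pi : ℂ) ≠ 0 := Complex.ofReal_ne_zero.mpr Real.pi_ne_zero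
  rw [show ∀ a b : ℂ, (-(1 / (Real.pi:ℂ)) * a + Complex.I * (-(1 / (Real.pi:ℂ)) * b)) / 2
      = -(1 / (2 * (Real.pi:ℂ))) * (a + Complex.I * b) from fun a b => by ring, h2]
  field_simp

end CauchyPompeiuAux
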